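/- Let H be a real inner product space, B a symmetric bilinear form on H, and τ : H → ℝ a linear functional. Suppose W ⊆ H is a finite-dimensional subspace of dimension K such that B(w,w) < 0 for every nonzero w ∈ W, and such that B(ν,ν) ≥ 0 for every ν ∈ H orthogonal to W. Define Ind to be the supremum of dimensions of subspaces U ⊆ H such that τ(v) = 0 for all v ∈ U and B(v,v) < 0 for every nonzero v ∈ U. Then K − 1 ≤ Ind ≤ K. -/

import Mathlib

open InnerProductSpace

/-- Abstract form of Lemma `lemma0`: `K - 1 ≤ Ind ≤ K`, where `Ind` is the supremum of
dimensions of subspaces of `H` contained in `ker τ` on which `B` is negative definite,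
and `W` is a `K`-dimensional subspace on which `B` is negative definite and whose
orthogonal complement sees only nonnegative values of `B`. -/
theorem stmt0 {H : Type*} [NormedAddCommGroup H] [InnerProductSpace ℝ H]
    (B : H →ₗ[ℝ] H →ₗ[ℝ] ℝ) (hBsymm : ∀ x y : H, B x y = B y x)
    (τ : H →ₗ[ℝ] ℝ)
    (W : Submodule ℝ H) [FiniteDimensional ℝ W] (K : ℕ)
    (hK : Module.finrank ℝ W = K)
    (hWneg : ∀ w ∈ W, w ≠ 0 → B w w < 0)
    (hWperp : ∀ ν : H, (∀ w ∈ W, ⟪ν, w⟫_ℝ = 0) → 0 ≤ B ν ν)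
    (Ind : Cardinal)
    (hInd : Ind = sSup {c : Cardinal |
      ∃ U : Submodule ℝ H, (∀ v ∈ U, τ v = 0) ∧
        (∀ v ∈ U, v ≠ 0 → B v v < 0) ∧ c = Module.rank ℝ U}) :
    ((K - 1 : ℕ) : Cardinal) ≤ Ind ∧ Ind ≤ (K : Cardinal) := by
  set S := {c : Cardinal |
      ∃ U : Submodule ℝ H, (∀ v ∈ U, τ v = 0) ∧
        (∀ v ∈ U, v ≠ 0 → B v v < 0) ∧ c = Module.rank ℝ U} with hSdef
  -- every element of S is at most K
  have hub : ∀ c ∈ S, c ≤ (K : Cardinal) := by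
    rintro c ⟨U, hUτ, hUneg, rfl⟩
    have hinj : Function.Injective
        ((W.orthogonalProjectionOnto).toLinearMap.comp U.subtype) := by
      rw [← LinearMap.ker_eq_bot, Submodule.eq_bot_iff]
      rintro ⟨v, hv⟩ hker
      have h0 : W.orthogonalProjectionOnto v = 0 := hker
      have hperp : v ∈ Wᗮ := by
        rwa [Submodule.orthogonalProjectionOnto_eq_zero_iff] at h0
      have hnn : 0 ≤ B v v := hWperp v (fun w hw => by
        rw [real_inner_comm]; exact hperp w hw)
      by_contra hne
      have hv0 : v ≠ 0 := by
        simpa [Submodule.coe_eq_zero] using hne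
      exact absurd hnn (not_le.mpr (hUneg v hv hv0))
    calc Module.rank ℝ U ≤ Module.rank ℝ W :=
          LinearMap.rank_le_of_injective _ hinj
      _ = (K : Cardinal) := by rw [← Module.finrank_eq_rank, hK]
  have hne : S.Nonempty := by
    refine ⟨0, ⊥, ?_, ?_, ?_⟩
    · rintro v hv; simp at hv; simp [hv]
    · rintro v hv hv0; simp at hv; exact absurd hv hv0
    · simp
  constructor
  · -- lower bound via U₀ = W ⊓ ker τ
    set U₀ := W ⊓ LinearMap.ker τ with hU₀def
    have hU₀mem : Module.rank ℝ U₀ ∈ S := by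
      refine ⟨U₀, ?_, ?_, rfl⟩
      · rintro v ⟨-, hv2⟩; exact hv2
      · rintro v ⟨hv1, -⟩ hv0; exact hWneg v hv1 hv0
    set g := τ.comp W.subtype with hgdef
    have hmap : (LinearMap.ker g).map W.subtype = U₀ := by
      ext x
      constructor
      · rintro ⟨⟨w, hw⟩, hwk, rfl⟩
        exact ⟨hw, hwk⟩
      · rintro ⟨hx1, hx2⟩
        exact ⟨⟨x, hx1⟩, hx2, rfl⟩
    have hfr : Module.finrank ℝ U₀ = Module.finrank ℝ (LinearMap.ker g) := by
      rw [← hmap, Submodule.finrank_map_subtype_eq]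
    have hrange : Module.finrank ℝ (LinearMap.range g) ≤ 1 := by
      have := Submodule.finrank_le (LinearMap.range g)
      simpa using this
    have hsum := LinearMap.finrank_range_add_finrank_ker g
    rw [hK] at hsum
    have hge : K - 1 ≤ Module.finrank ℝ U₀ := by omega
    have hfin : FiniteDimensional ℝ U₀ :=
      Submodule.finiteDimensional_of_le (inf_le_left : U₀ ≤ W)
    rw [hInd]
    refine le_trans ?_ (le_csSup ⟨(K : Cardinal), hub⟩ hU₀mem)
    rw [← Module.finrank_eq_rank]
    exact_mod_cast Nat.cast_le.mpr hge
  · rw [hInd]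
    exact csSup_le hne hub
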